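/- Let −1 ≤ t < −1/2. There exists a constant C_t > 0 such that for all complex sequences a ∈ ℓ^{t,2} and b ∈ ℓ^{1,2}, the convolution a*b, defined by (a*b)_n = ∑_{m∈ℤ} a_{n−m} b_m, is well defined (each series converges absolutely) and satisfies ‖a*b‖_{t,2} ≤ C_t ‖a‖_{t,2} ‖b‖_{1,2}. -/

import Mathlib

noncomputable def wt (s : ℝ) (k : ℤ) : ℝ := (1 + |k| : ℝ) ^ s
lemma base_pos (k : ℤ) : (0:ℝ) < (1 + |k| : ℝ) := by positivity
lemma one_le_base (k : ℤ) : (1:ℝ) ≤ (1 + |k| : ℝ) := by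
  have : (0:ℝ) ≤ (|k| : ℤ) := by exact_mod_cast abs_nonneg k
  linarith
lemma wt_pos (s : ℝ) (k : ℤ) : 0 < wt s k := Real.rpow_pos_of_pos (base_pos k) s
lemma wt_add (s s' : ℝ) (k : ℤ) : wt (s + s') k = wt s k * wt s' k := Real.rpow_add (base_pos k) _ _
lemma wt_le_one {s : ℝ} (hs : s ≤ 0) (k : ℤ) : wt s k ≤ 1 :=
  Real.rpow_le_one_of_one_le_of_nonpos (one_le_base k) hs
lemma wt_sq (s : ℝ) (k : ℤ) : wt s k ^ 2 = wt (2*s) k := by rw [two_mul, wt_add]; ring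
lemma wt_cancel (s : ℝ) (k : ℤ) : wt s k * wt (-s) k = 1 := by
  rw [← wt_add]; simp [wt, Real.rpow_zero]

lemma wt_base_le {c : ℝ} (hc : 0 < c) {s : ℝ} (hs : 0 ≤ s) {j k : ℤ}
    (h : (1 + |j| : ℝ) ≤ c * (1 + |k| : ℝ)) : wt s j ≤ c ^ s * wt s k := by
  have h2 := Real.rpow_le_rpow (le_of_lt (base_pos j)) h hs
  rwa [Real.mul_rpow (le_of_lt hc) (le_of_lt (base_pos k))] at h2

lemma wt_sub_le {s : ℝ} (hs : 0 ≤ s) (n m : ℤ) : wt s (n - m) ≤ wt s n * wt s m := by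
  have hb : (1 + |n - m| : ℝ) ≤ (1 + |n| : ℝ) * (1 + |m| : ℝ) := by
    push_cast
    have h := abs_sub (n:ℝ) (m:ℝ)
    nlinarith [abs_nonneg (n:ℝ), abs_nonneg (m:ℝ)]
  have h2 := Real.rpow_le_rpow (le_of_lt (base_pos (n-m))) hb hs
  rwa [Real.mul_rpow (le_of_lt (base_pos n)) (le_of_lt (base_pos m))] at h2

lemma kernel (t : ℝ) (ht₁ : -1 ≤ t) (ht₀ : t ≤ 0) (n m : ℤ) :
    wt t n * wt (-t) (n - m) * wt (-1) m ≤
      3 ^ (-t) * (wt t n * wt (-(t+1)) m) + 2 ^ (-t) * wt (-1) m := by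
  have hnt : 0 ≤ -t := by linarith
  rcases le_or_gt (|(n:ℝ)|) (2 * |(m:ℝ)|) with hc | hc
  · -- |n| ≤ 2|m| : 1+|n-m| ≤ 3(1+|m|)
    have hb : (1 + |n - m| : ℝ) ≤ 3 * (1 + |m| : ℝ) := by
      push_cast
      have h := abs_sub (n:ℝ) (m:ℝ)
      nlinarith [abs_nonneg (n:ℝ), abs_nonneg (m:ℝ)]
    have h1 : wt (-t) (n - m) ≤ 3 ^ (-t) * wt (-t) m := wt_base_le (by norm_num) hnt hb
    have h2 : wt t n * wt (-t) (n - m) * wt (-1) m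
        ≤ 3 ^ (-t) * (wt t n * (wt (-t) m * wt (-1) m)) := by
      have := mul_le_mul_of_nonneg_left h1 (le_of_lt (wt_pos t n))
      have := mul_le_mul_of_nonneg_right this (le_of_lt (wt_pos (-1) m))
      nlinarith [this]
    have h3 : wt (-t) m * wt (-1) m = wt (-(t+1)) m := by
      rw [← wt_add]; ring_nf
    rw [h3] at h2
    have : 0 ≤ 2 ^ (-t) * wt (-1) m :=
      mul_nonneg (le_of_lt (Real.rpow_pos_of_pos two_pos _)) (le_of_lt (wt_pos _ m))
    linarith
  · -- 2|m| < |n| : 1+|n-m| ≤ 2(1+|n|)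
    have hb : (1 + |n - m| : ℝ) ≤ 2 * (1 + |n| : ℝ) := by
      push_cast
      have h := abs_sub (n:ℝ) (m:ℝ)
      nlinarith [abs_nonneg (n:ℝ), abs_nonneg (m:ℝ)]
    have h1 : wt (-t) (n - m) ≤ 2 ^ (-t) * wt (-t) n := wt_base_le (by norm_num) hnt hb
    have h2 : wt t n * wt (-t) (n - m) * wt (-1) m
        ≤ 2 ^ (-t) * ((wt t n * wt (-t) n) * wt (-1) m) := by
      have h4 := mul_le_mul_of_nonneg_left h1 (le_of_lt (wt_pos t n))
      have h5 := mul_le_mul_of_nonneg_right h4 (le_of_lt (wt_pos (-1) m))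
      nlinarith [h5]
    rw [wt_cancel, one_mul] at h2
    have : 0 ≤ 3 ^ (-t) * (wt t n * wt (-(t+1)) m) :=
      mul_nonneg (le_of_lt (Real.rpow_pos_of_pos three_pos _))
        (mul_nonneg (le_of_lt (wt_pos _ _)) (le_of_lt (wt_pos _ _)))
    linarith

lemma tsum_cs {f g : ℤ → ℝ} (hf0 : ∀ k, 0 ≤ f k) (hg0 : ∀ k, 0 ≤ g k)
    (hf : Summable fun k => f k ^ 2) (hg : Summable fun k => g k ^ 2) :
    Summable (fun k => f k * g k) ∧
      ∑' k, f k * g k ≤ Real.sqrt (∑' k, f k ^ 2) * Real.sqrt (∑' k, g k ^ 2) := by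
  have hs : Summable fun k => f k * g k := by
    refine ((hf.add hg).div_const 2).of_nonneg_of_le
      (fun k => mul_nonneg (hf0 k) (hg0 k)) (fun k => ?_)
    nlinarith [sq_nonneg (f k - g k)]
  refine ⟨hs, hs.tsum_le_of_sum_le fun s => ?_⟩
  have h1 : (∑ i ∈ s, f i * g i) ^ 2 ≤ (∑' k, f k ^ 2) * (∑' k, g k ^ 2) := by
    refine le_trans (Finset.sum_mul_sq_le_sq_mul_sq s f g) ?_
    exact mul_le_mul (Summable.sum_le_tsum s (fun i _ => sq_nonneg _) hf)
      (Summable.sum_le_tsum s (fun i _ => sq_nonneg _) hg)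
      (Finset.sum_nonneg fun i _ => sq_nonneg _) (tsum_nonneg fun k => sq_nonneg _)
  calc ∑ i ∈ s, f i * g i ≤ |∑ i ∈ s, f i * g i| := le_abs_self _
    _ = Real.sqrt ((∑ i ∈ s, f i * g i) ^ 2) := (Real.sqrt_sq_eq_abs _).symm
    _ ≤ Real.sqrt ((∑' k, f k ^ 2) * (∑' k, g k ^ 2)) := Real.sqrt_le_sqrt h1
    _ = _ := Real.sqrt_mul (tsum_nonneg fun k => sq_nonneg _) _

lemma tsum_wcs {h f : ℤ → ℝ} (hh0 : ∀ k, 0 ≤ h k) (hf0 : ∀ k, 0 ≤ f k)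
    (hh : Summable h) (hhf : Summable fun k => h k * f k ^ 2) :
    Summable (fun k => h k * f k) ∧
      ∑' k, h k * f k ≤ Real.sqrt (∑' k, h k) * Real.sqrt (∑' k, h k * f k ^ 2) := by
  have e1 : ∀ k, Real.sqrt (h k) * (Real.sqrt (h k) * f k) = h k * f k := by
    intro k; rw [← mul_assoc, Real.mul_self_sqrt (hh0 k)]
  have e2 : ∀ k, (Real.sqrt (h k)) ^ 2 = h k := fun k => Real.sq_sqrt (hh0 k)
  have e3 : ∀ k, (Real.sqrt (h k) * f k) ^ 2 = h k * f k ^ 2 := by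
    intro k; rw [mul_pow, e2]
  have key := tsum_cs (f := fun k => Real.sqrt (h k)) (g := fun k => Real.sqrt (h k) * f k)
    (fun k => Real.sqrt_nonneg _) (fun k => mul_nonneg (Real.sqrt_nonneg _) (hf0 k))
    (by simpa only [e2] using hh) (by simpa only [e3] using hhf)
  constructor
  · exact key.1.congr e1
  · calc ∑' k, h k * f k = ∑' k, Real.sqrt (h k) * (Real.sqrt (h k) * f k) := by
          exact tsum_congr fun k => (e1 k).symm
    _ ≤ _ := by simpa only [e2, e3] using key.2

lemma summable_shift {f : ℤ → ℝ} (hf : Summable f) (n : ℤ) : Summable fun m => f (n - m) :=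
  ((Equiv.subLeft n).summable_iff (f := f)).2 hf

lemma tsum_shift (f : ℤ → ℝ) (n : ℤ) : ∑' m, f (n - m) = ∑' k, f k :=
  (Equiv.subLeft n).tsum_eq f

lemma summable_shift' {f : ℤ → ℝ} (hf : Summable f) (m : ℤ) : Summable fun n => f (n - m) :=
  ((Equiv.subRight m).summable_iff (f := f)).2 hf

lemma tsum_shift' (f : ℤ → ℝ) (m : ℤ) : ∑' n, f (n - m) = ∑' k, f k :=
  (Equiv.subRight m).tsum_eq f

lemma summable_wt {s : ℝ} (hs : s < -1) : Summable (wt s) := by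
  have hnat : Summable fun n : ℕ => (1 + (n:ℝ)) ^ s := by
    have h0 : Summable fun n : ℕ => ((n:ℝ)) ^ s := Real.summable_nat_rpow.2 hs
    have h1 := (summable_nat_add_iff 1).2 h0
    refine h1.congr fun n => ?_
    push_cast
    ring_nf
  refine Summable.of_nat_of_neg (hnat.congr fun n => ?_) (hnat.congr fun n => ?_) <;>
    · simp [wt]


/-- Convolution estimate: for `−1 ≤ t < −1/2` there is `C_t > 0` such that for all
`a ∈ ℓ^{t,2}` and `b ∈ ℓ^{1,2}`, the convolution `a*b` is well defined (each series converges
absolutely) and `‖a*b‖_{t,2} ≤ C_t ‖a‖_{t,2} ‖b‖_{1,2}`. -/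
theorem stmt_6 (t : ℝ) (ht₁ : -1 ≤ t) (ht₂ : t < -(1 / 2)) :
    ∃ C : ℝ, 0 < C ∧ ∀ a b : ℤ → ℂ,
      Summable (fun k : ℤ => ((1 + |k| : ℝ) ^ t * ‖a k‖) ^ 2) →
      Summable (fun k : ℤ => ((1 + |k| : ℝ) ^ (1 : ℝ) * ‖b k‖) ^ 2) →
      (∀ n : ℤ, Summable fun m : ℤ => ‖a (n - m) * b m‖) ∧
      Summable (fun n : ℤ =>
        ((1 + |n| : ℝ) ^ t * ‖∑' m : ℤ, a (n - m) * b m‖) ^ 2) ∧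
      (∑' n : ℤ, ((1 + |n| : ℝ) ^ t * ‖∑' m : ℤ, a (n - m) * b m‖) ^ 2)
          ^ ((1 : ℝ) / 2)
        ≤ C * (∑' k : ℤ, ((1 + |k| : ℝ) ^ t * ‖a k‖) ^ 2) ^ ((1 : ℝ) / 2)
            * (∑' k : ℤ, ((1 + |k| : ℝ) ^ (1 : ℝ) * ‖b k‖) ^ 2) ^ ((1 : ℝ) / 2) := by
  have ht₀ : t ≤ 0 := by linarith
  have sumS₁ : Summable (wt (2 * t)) := summable_wt (by linarith)
  have sumS₂ : Summable fun k : ℤ => wt (-1) k ^ 2 := by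
    refine (summable_wt (by norm_num : (-2 : ℝ) < -1)).congr fun k => ?_
    rw [wt_sq]; norm_num
  set S₁ : ℝ := ∑' n : ℤ, wt (2 * t) n with hS₁
  set S₂ : ℝ := ∑' n : ℤ, wt (-1) n ^ 2 with hS₂
  refine ⟨3 ^ (-t) * Real.sqrt S₁ + 2 ^ (-t) * Real.sqrt S₂ + 1, by positivity,
    fun a b hf hg => ?_⟩
  set f : ℤ → ℝ := fun k => (1 + |k| : ℝ) ^ t * ‖a k‖ with hfdef
  set g : ℤ → ℝ := fun k => (1 + |k| : ℝ) ^ (1 : ℝ) * ‖b k‖ with hgdef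
  have f0 : ∀ k, 0 ≤ f k := fun k =>
    mul_nonneg (le_of_lt (wt_pos t k)) (norm_nonneg _)
  have g0 : ∀ k, 0 ≤ g k := fun k =>
    mul_nonneg (le_of_lt (wt_pos 1 k)) (norm_nonneg _)
  have abs_a : ∀ k, ‖a k‖ = wt (-t) k * f k := by
    intro k
    have : wt (-t) k * f k = (wt t k * wt (-t) k) * ‖a k‖ := by
      show wt (-t) k * (wt t k * ‖a k‖) = _; ring
    rw [this, wt_cancel, one_mul]
  have abs_b : ∀ k, ‖b k‖ = wt (-1) k * g k := by
    intro k
    have : wt (-1) k * g k = (wt 1 k * wt (-1) k) * ‖b k‖ := by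
      show wt (-1) k * (wt 1 k * ‖b k‖) = _; ring
    rw [this, wt_cancel, one_mul]
  set F : ℝ := ∑' k : ℤ, f k ^ 2 with hF
  set G : ℝ := ∑' k : ℤ, g k ^ 2 with hG
  have F0 : 0 ≤ F := tsum_nonneg fun k => sq_nonneg _
  have G0 : 0 ≤ G := tsum_nonneg fun k => sq_nonneg _
  -- Cauchy-Schwarz for shifted products
  have cs_n : ∀ n : ℤ, Summable (fun m => f (n - m) * g m) ∧
      ∑' m : ℤ, f (n - m) * g m ≤ Real.sqrt F * Real.sqrt G := by
    intro n
    have key := tsum_cs (f := fun m => f (n - m)) (g := g) (fun m => f0 _) g0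
      (summable_shift hf n) hg
    refine ⟨key.1, le_trans key.2 ?_⟩
    rw [tsum_shift (fun k => f k ^ 2) n]
  -- pointwise identity
  have key_id : ∀ n m : ℤ, ‖a (n - m) * b m‖
      = (wt (-t) (n - m) * wt (-1) m) * (f (n - m) * g m) := by
    intro n m
    rw [norm_mul, abs_a, abs_b]; ring
  -- Step 1: summability of convolution terms
  have wtt1 : ∀ m : ℤ, wt (-(t + 1)) m ≤ 1 := fun m => wt_le_one (by linarith) m
  have step1 : ∀ n : ℤ, Summable fun m : ℤ => ‖a (n - m) * b m‖ := by
    intro n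
    refine ((cs_n n).1.mul_left (wt (-t) n)).of_nonneg_of_le
      (fun m => norm_nonneg _) (fun m => ?_)
    rw [key_id n m]
    have h1 : wt (-t) (n - m) * wt (-1) m ≤ wt (-t) n := by
      have h2 : wt (-t) (n - m) ≤ wt (-t) n * wt (-t) m := wt_sub_le (by linarith) n m
      have h3 : wt (-t) m * wt (-1) m = wt (-(t + 1)) m := by rw [← wt_add]; ring_nf
      calc wt (-t) (n - m) * wt (-1) m ≤ (wt (-t) n * wt (-t) m) * wt (-1) m :=
            mul_le_mul_of_nonneg_right h2 (le_of_lt (wt_pos _ _))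
        _ = wt (-t) n * (wt (-(t + 1)) m) := by rw [← h3]; ring
        _ ≤ wt (-t) n * 1 := mul_le_mul_of_nonneg_left (wtt1 m) (le_of_lt (wt_pos _ _))
        _ = wt (-t) n := mul_one _
    exact mul_le_mul_of_nonneg_right h1 (mul_nonneg (f0 _) (g0 _))
  refine ⟨step1, ?_⟩
  -- the sequence h
  set hs : ℤ → ℝ := fun m => wt (-1) m * g m with hhs
  have hs0 : ∀ m, 0 ≤ hs m := fun m => mul_nonneg (le_of_lt (wt_pos _ _)) (g0 m)
  have cs_h := tsum_cs (f := wt (-1)) (g := g) (fun k => le_of_lt (wt_pos _ _)) g0 sumS₂ hg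
  have sum_hs : Summable hs := cs_h.1
  have Hh : ∑' m, hs m ≤ Real.sqrt S₂ * Real.sqrt G := cs_h.2
  have hs_tsum0 : 0 ≤ ∑' m, hs m := tsum_nonneg hs0
  -- TA and TB
  set TA : ℤ → ℝ := fun n => 3 ^ (-t) * (wt t n * (Real.sqrt F * Real.sqrt G)) with hTA
  set TB : ℤ → ℝ := fun n => 2 ^ (-t) * ∑' m : ℤ, hs m * f (n - m) with hTB
  have sum_hf2 : ∀ n : ℤ, Summable fun m => hs m * f (n - m) ^ 2 := by
    intro n
    refine ((summable_shift hf n).mul_left (∑' m, hs m)).of_nonneg_of_le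
      (fun m => mul_nonneg (hs0 m) (sq_nonneg _)) (fun m => ?_)
    exact mul_le_mul_of_nonneg_right (Summable.le_tsum sum_hs m fun j _ => hs0 j) (sq_nonneg _)
  have wcs_n : ∀ n : ℤ, Summable (fun m => hs m * f (n - m)) ∧
      ∑' m, hs m * f (n - m) ≤ Real.sqrt (∑' m, hs m) *
        Real.sqrt (∑' m, hs m * f (n - m) ^ 2) :=
    fun n => tsum_wcs hs0 (fun m => f0 _) sum_hs (sum_hf2 n)
  have TA0 : ∀ n, 0 ≤ TA n := fun n => by
    have := wt_pos t n; positivity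
  have TB0 : ∀ n, 0 ≤ TB n := fun n =>
    mul_nonneg (by positivity) (tsum_nonneg fun m => mul_nonneg (hs0 m) (f0 _))
  -- pointwise bound P n ≤ TA n + TB n
  have Pbound : ∀ n : ℤ, wt t n * ‖∑' m : ℤ, a (n - m) * b m‖ ≤ TA n + TB n := by
    intro n
    have habs : ‖∑' m : ℤ, a (n - m) * b m‖
        ≤ ∑' m : ℤ, ‖a (n - m) * b m‖ := by
      exact norm_tsum_le_tsum_norm (step1 n)
    have h1 : wt t n * ‖∑' m : ℤ, a (n - m) * b m‖
        ≤ ∑' m : ℤ, wt t n * ‖a (n - m) * b m‖ := by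
      rw [tsum_mul_left]
      exact mul_le_mul_of_nonneg_left habs (le_of_lt (wt_pos t n))
    refine le_trans h1 ?_
    -- rewrite terms by key identity, then kernel bound
    have hL : ∀ m : ℤ, wt t n * ‖a (n - m) * b m‖
        = (wt t n * wt (-t) (n - m) * wt (-1) m) * (f (n - m) * g m) := by
      intro m; rw [key_id n m]; ring
    have sumL : Summable fun m => wt t n * ‖a (n - m) * b m‖ :=
      (step1 n).mul_left _
    have sumR1 : Summable fun m => wt (-(t + 1)) m * (f (n - m) * g m) := by
      refine (cs_n n).1.of_nonneg_of_le
        (fun m => mul_nonneg (le_of_lt (wt_pos _ _)) (mul_nonneg (f0 _) (g0 _)))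
        (fun m => ?_)
      calc wt (-(t + 1)) m * (f (n - m) * g m) ≤ 1 * (f (n - m) * g m) :=
            mul_le_mul_of_nonneg_right (wtt1 m) (mul_nonneg (f0 _) (g0 _))
        _ = f (n - m) * g m := one_mul _
    have sumR2 : Summable fun m => hs m * f (n - m) := (wcs_n n).1
    have step2 : (∑' m : ℤ, wt t n * ‖a (n - m) * b m‖)
        ≤ 3 ^ (-t) * wt t n * (∑' m : ℤ, wt (-(t + 1)) m * (f (n - m) * g m))
          + 2 ^ (-t) * (∑' m : ℤ, hs m * f (n - m)) := by
      rw [← tsum_mul_left (a := 3 ^ (-t) * wt t n), ← tsum_mul_left (a := 2 ^ (-t)),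
        ← Summable.tsum_add ((sumR1.mul_left _)) ((sumR2.mul_left _))]
      refine Summable.tsum_le_tsum (fun m => ?_) sumL ((sumR1.mul_left _).add (sumR2.mul_left _))
      rw [hL m]
      have hk := kernel t ht₁ ht₀ n m
      have hfg : 0 ≤ f (n - m) * g m := mul_nonneg (f0 _) (g0 _)
      have := mul_le_mul_of_nonneg_right hk hfg
      calc (wt t n * wt (-t) (n - m) * wt (-1) m) * (f (n - m) * g m)
          ≤ (3 ^ (-t) * (wt t n * wt (-(t + 1)) m) + 2 ^ (-t) * wt (-1) m)
            * (f (n - m) * g m) := this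
        _ = 3 ^ (-t) * wt t n * (wt (-(t + 1)) m * (f (n - m) * g m))
            + 2 ^ (-t) * (hs m * f (n - m)) := by show _ = _ + 2 ^ (-t) * ((wt (-1) m * g m) * f (n-m)); ring
    refine le_trans step2 ?_
    have hA : (∑' m : ℤ, wt (-(t + 1)) m * (f (n - m) * g m))
        ≤ Real.sqrt F * Real.sqrt G := by
      refine le_trans (Summable.tsum_le_tsum (fun m => ?_) sumR1 (cs_n n).1) (cs_n n).2
      calc wt (-(t + 1)) m * (f (n - m) * g m) ≤ 1 * (f (n - m) * g m) :=
            mul_le_mul_of_nonneg_right (wtt1 m) (mul_nonneg (f0 _) (g0 _))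
        _ = f (n - m) * g m := one_mul _
    have h3t : (0:ℝ) ≤ 3 ^ (-t) * wt t n := by
      have := wt_pos t n; positivity
    have := mul_le_mul_of_nonneg_left hA h3t
    show _ ≤ 3 ^ (-t) * (wt t n * (Real.sqrt F * Real.sqrt G)) + TB n
    have hrw : 3 ^ (-t) * (wt t n * (Real.sqrt F * Real.sqrt G))
        = 3 ^ (-t) * wt t n * (Real.sqrt F * Real.sqrt G) := by ring
    rw [hrw]
    exact add_le_add_left this _
  -- ℓ² bound for TA
  have TA_sq : ∀ n, TA n ^ 2 = (3 ^ (-t) * (Real.sqrt F * Real.sqrt G)) ^ 2 * wt (2 * t) n := by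
    intro n
    show (3 ^ (-t) * (wt t n * (Real.sqrt F * Real.sqrt G))) ^ 2 = _
    rw [← wt_sq]; ring
  have sumTA2 : Summable fun n => TA n ^ 2 := by
    refine (sumS₁.mul_left ((3 ^ (-t) * (Real.sqrt F * Real.sqrt G)) ^ 2)).congr fun n => ?_
    rw [TA_sq n]
  have tsumTA2 : ∑' n, TA n ^ 2 ≤ (3 ^ (-t) * Real.sqrt S₁ * (Real.sqrt F * Real.sqrt G)) ^ 2 := by
    have : ∑' n, TA n ^ 2 = (3 ^ (-t) * (Real.sqrt F * Real.sqrt G)) ^ 2 * S₁ := by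
      rw [hS₁, ← tsum_mul_left]
      exact tsum_congr fun n => TA_sq n
    have hS₁0 : 0 ≤ S₁ := tsum_nonneg fun n => le_of_lt (wt_pos _ _)
    have e : (3 ^ (-t) * Real.sqrt S₁ * (Real.sqrt F * Real.sqrt G)) ^ 2
        = (3 ^ (-t) * (Real.sqrt F * Real.sqrt G)) ^ 2 * Real.sqrt S₁ ^ 2 := by ring
    rw [this, e, Real.sq_sqrt hS₁0]
  -- Fubini for the TB part
  have hS₂0 : 0 ≤ S₂ := tsum_nonneg fun n => sq_nonneg _
  have hS₁0 : 0 ≤ S₁ := tsum_nonneg fun n => le_of_lt (wt_pos _ _)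
  have hΦswap : Summable (fun q : ℤ × ℤ => hs q.1 * f (q.2 - q.1) ^ 2) := by
    refine (summable_prod_of_nonneg (fun q => mul_nonneg (hs0 _) (sq_nonneg _))).2
      ⟨fun m => (summable_shift' hf m).mul_left (hs m), ?_⟩
    refine (sum_hs.mul_right F).congr fun m => ?_
    show hs m * F = ∑' n : ℤ, hs m * f (n - m) ^ 2
    rw [tsum_mul_left, tsum_shift' (fun k => f k ^ 2) m, ← hF]
  have hΦ : Summable (fun p : ℤ × ℤ => hs p.2 * f (p.1 - p.2) ^ 2) :=
    (((Equiv.prodComm ℤ ℤ).summable_iff).2 hΦswap).congr fun p => rfl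
  have sumU : Summable fun n : ℤ => ∑' m : ℤ, hs m * f (n - m) ^ 2 :=
    ((summable_prod_of_nonneg (fun p => mul_nonneg (hs0 _) (sq_nonneg _))).1 hΦ).2
  have tsumU : ∑' n : ℤ, ∑' m : ℤ, hs m * f (n - m) ^ 2 = (∑' m, hs m) * F := by
    rw [← Summable.tsum_prod' hΦ (fun n => hΦ.prod_factor n)]
    have e1 : ∑' p : ℤ × ℤ, hs p.2 * f (p.1 - p.2) ^ 2
        = ∑' q : ℤ × ℤ, hs q.1 * f (q.2 - q.1) ^ 2 :=
      (Equiv.prodComm ℤ ℤ).tsum_eq (fun q : ℤ × ℤ => hs q.1 * f (q.2 - q.1) ^ 2)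
    rw [e1, Summable.tsum_prod' hΦswap (fun m => (summable_shift' hf m).mul_left (hs m))]
    calc ∑' (m : ℤ) (n : ℤ), hs m * f (n - m) ^ 2 = ∑' m : ℤ, hs m * F :=
          tsum_congr fun m => by rw [tsum_mul_left, tsum_shift' (fun k => f k ^ 2) m, ← hF]
      _ = (∑' m, hs m) * F := tsum_mul_right
  -- pointwise square bound for TB
  have TB_sq : ∀ n : ℤ, TB n ^ 2
      ≤ (2 ^ (-t)) ^ 2 * (∑' m, hs m) * (∑' m : ℤ, hs m * f (n - m) ^ 2) := by
    intro n
    have hU0 : 0 ≤ ∑' m : ℤ, hs m * f (n - m) ^ 2 :=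
      tsum_nonneg fun m => mul_nonneg (hs0 m) (sq_nonneg _)
    have hb : TB n ≤ 2 ^ (-t) * (Real.sqrt (∑' m, hs m)
        * Real.sqrt (∑' m : ℤ, hs m * f (n - m) ^ 2)) :=
      mul_le_mul_of_nonneg_left (wcs_n n).2 (by positivity)
    calc TB n ^ 2 ≤ (2 ^ (-t) * (Real.sqrt (∑' m, hs m)
          * Real.sqrt (∑' m : ℤ, hs m * f (n - m) ^ 2))) ^ 2 :=
          pow_le_pow_left₀ (TB0 n) hb 2
      _ = (2 ^ (-t)) ^ 2 * (Real.sqrt (∑' m, hs m) ^ 2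
          * Real.sqrt (∑' m : ℤ, hs m * f (n - m) ^ 2) ^ 2) := by ring
      _ = _ := by rw [Real.sq_sqrt hs_tsum0, Real.sq_sqrt hU0]; ring
  have sumTB2 : Summable fun n => TB n ^ 2 :=
    (sumU.mul_left ((2 ^ (-t)) ^ 2 * (∑' m, hs m))).of_nonneg_of_le
      (fun n => sq_nonneg _) (fun n => TB_sq n)
  set XA : ℝ := 3 ^ (-t) * Real.sqrt S₁ * (Real.sqrt F * Real.sqrt G) with hXA
  set XB : ℝ := 2 ^ (-t) * Real.sqrt S₂ * (Real.sqrt F * Real.sqrt G) with hXB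
  have XA0 : 0 ≤ XA := by positivity
  have XB0 : 0 ≤ XB := by positivity
  have tsumTB2 : ∑' n, TB n ^ 2 ≤ XB ^ 2 := by
    have step := Summable.tsum_le_tsum TB_sq sumTB2 (sumU.mul_left ((2 ^ (-t)) ^ 2 * (∑' m, hs m)))
    rw [tsum_mul_left, tsumU] at step
    refine le_trans step ?_
    have hXBsq : XB ^ 2 = (2 ^ (-t)) ^ 2 * (S₂ * (F * G)) := by
      rw [show XB ^ 2 = (2 ^ (-t)) ^ 2 * (Real.sqrt S₂ ^ 2
        * (Real.sqrt F ^ 2 * Real.sqrt G ^ 2)) from by rw [hXB]; ring,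
        Real.sq_sqrt hS₂0, Real.sq_sqrt F0, Real.sq_sqrt G0]
    rw [hXBsq]
    have h1 : (∑' m, hs m) ^ 2 ≤ S₂ * G := by
      have h2 := mul_self_le_mul_self hs_tsum0 Hh
      calc (∑' m, hs m) ^ 2 = (∑' m, hs m) * (∑' m, hs m) := sq (∑' m, hs m) ▸ rfl
        _ ≤ (Real.sqrt S₂ * Real.sqrt G) * (Real.sqrt S₂ * Real.sqrt G) := h2
        _ = Real.sqrt S₂ ^ 2 * Real.sqrt G ^ 2 := by ring
        _ = S₂ * G := by rw [Real.sq_sqrt hS₂0, Real.sq_sqrt G0]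
    calc (2 ^ (-t)) ^ 2 * (∑' m, hs m) * ((∑' m, hs m) * F)
        = (2 ^ (-t)) ^ 2 * ((∑' m, hs m) ^ 2 * F) := by ring
      _ ≤ (2 ^ (-t)) ^ 2 * ((S₂ * G) * F) := by
          have h3 := mul_le_mul_of_nonneg_right h1 F0
          exact mul_le_mul_of_nonneg_left h3 (sq_nonneg _)
      _ = (2 ^ (-t)) ^ 2 * (S₂ * (F * G)) := by ring
  -- Minkowski
  have csTT := tsum_cs TA0 TB0 sumTA2 sumTB2
  have sqTA : Real.sqrt (∑' n, TA n ^ 2) ≤ XA := by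
    rw [show XA = Real.sqrt (XA ^ 2) from (Real.sqrt_sq XA0).symm]
    exact Real.sqrt_le_sqrt tsumTA2
  have sqTB : Real.sqrt (∑' n, TB n ^ 2) ≤ XB := by
    rw [show XB = Real.sqrt (XB ^ 2) from (Real.sqrt_sq XB0).symm]
    exact Real.sqrt_le_sqrt tsumTB2
  have hTT : ∑' n, TA n * TB n ≤ XA * XB :=
    le_trans csTT.2 (mul_le_mul sqTA sqTB (Real.sqrt_nonneg _) XA0)
  have sumQ2 : Summable fun n => (TA n + TB n) ^ 2 := by
    refine (sumTA2.add ((csTT.1.mul_left 2).add sumTB2)).congr fun n => ?_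
    ring
  have tsumQ2 : ∑' n, (TA n + TB n) ^ 2 ≤ (XA + XB) ^ 2 := by
    calc ∑' n, (TA n + TB n) ^ 2
        = ∑' n, (TA n ^ 2 + (2 * (TA n * TB n) + TB n ^ 2)) := tsum_congr fun n => by ring
      _ = (∑' n, TA n ^ 2) + ((∑' n, 2 * (TA n * TB n)) + ∑' n, TB n ^ 2) := by
          rw [Summable.tsum_add sumTA2 ((csTT.1.mul_left 2).add sumTB2),
            Summable.tsum_add (csTT.1.mul_left 2) sumTB2]
      _ = (∑' n, TA n ^ 2) + (2 * (∑' n, TA n * TB n) + ∑' n, TB n ^ 2) := by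
          rw [tsum_mul_left]
      _ ≤ XA ^ 2 + (2 * (XA * XB) + XB ^ 2) := by
          have h2 : 2 * (∑' n, TA n * TB n) ≤ 2 * (XA * XB) := by linarith
          have := add_le_add h2 tsumTB2
          exact add_le_add tsumTA2 this
      _ = (XA + XB) ^ 2 := by ring
  -- conclude for P
  have P0 : ∀ n : ℤ, 0 ≤ wt t n * ‖∑' m : ℤ, a (n - m) * b m‖ :=
    fun n => mul_nonneg (le_of_lt (wt_pos t n)) (norm_nonneg _)
  have sumP2 : Summable fun n : ℤ =>
      (wt t n * ‖∑' m : ℤ, a (n - m) * b m‖) ^ 2 :=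
    sumQ2.of_nonneg_of_le (fun n => sq_nonneg _)
      (fun n => pow_le_pow_left₀ (P0 n) (Pbound n) 2)
  have tsumP2 : ∑' n : ℤ, (wt t n * ‖∑' m : ℤ, a (n - m) * b m‖) ^ 2
      ≤ (XA + XB) ^ 2 :=
    le_trans (Summable.tsum_le_tsum (fun n => pow_le_pow_left₀ (P0 n) (Pbound n) 2) sumP2 sumQ2) tsumQ2
  refine ⟨sumP2, ?_⟩
  have lhs_le : (∑' n : ℤ, ((1 + |n| : ℝ) ^ t
      * ‖∑' m : ℤ, a (n - m) * b m‖) ^ 2) ^ ((1:ℝ)/2) ≤ XA + XB := by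
    rw [← Real.sqrt_eq_rpow]
    have h4 : Real.sqrt (∑' n : ℤ, ((1 + |n| : ℝ) ^ t
        * ‖∑' m : ℤ, a (n - m) * b m‖) ^ 2)
        ≤ Real.sqrt ((XA + XB) ^ 2) := Real.sqrt_le_sqrt tsumP2
    rwa [Real.sqrt_sq (add_nonneg XA0 XB0)] at h4
  refine le_trans lhs_le ?_
  have rhs_eq : (3 ^ (-t) * Real.sqrt S₁ + 2 ^ (-t) * Real.sqrt S₂ + 1)
      * (∑' k : ℤ, ((1 + |k| : ℝ) ^ t * ‖a k‖) ^ 2) ^ ((1:ℝ)/2)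
      * (∑' k : ℤ, ((1 + |k| : ℝ) ^ (1:ℝ) * ‖b k‖) ^ 2) ^ ((1:ℝ)/2)
      = (3 ^ (-t) * Real.sqrt S₁ + 2 ^ (-t) * Real.sqrt S₂ + 1)
        * Real.sqrt F * Real.sqrt G := by
    rw [← Real.sqrt_eq_rpow, ← Real.sqrt_eq_rpow, hF, hG]
  rw [rhs_eq]
  have expand : (3 ^ (-t) * Real.sqrt S₁ + 2 ^ (-t) * Real.sqrt S₂ + 1)
      * Real.sqrt F * Real.sqrt G = XA + XB + Real.sqrt F * Real.sqrt G := by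
    rw [hXA, hXB]; ring
  rw [expand]
  exact le_add_of_nonneg_right (mul_nonneg (Real.sqrt_nonneg F) (Real.sqrt_nonneg G))
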